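/- Let F: Z^r → Z be periodic in each component with common period D, and let ξ be a complex number with ξ^D = 1 (not necessarily primitive). Define S(n) = Σ_{q_1=0}^{n} Σ_{q_2=0}^{n−q_1} ... Σ_{q_r=0}^{n−q_1−...−q_{r−1}} C(n,q_1) C(n−q_1,q_2) ··· C(n−q_1−...−q_{r−1}, q_r) · ξ^{F(q_1,...,q_r)}. Then S(n) = Σ_{j_1=0}^{D−1} Σ_{j_2=0}^{j_1} ... Σ_{j_r=0}^{j_{r−1}} c_{j_1,...,j_r}(D) · (1 + ξ_D^{−j_1} + ... + ξ_D^{−j_r})^n, where c_{j_1,...,j_r}(D) = (1/D^r) Σ_{b_r=0}^{D−1} ... Σ_{b_1=0}^{D−1} ξ^{F(b_1,...,b_r)} Σ_{(j_1',...,j_r') ∈ Sym(j_1,...,j_r)} ξ_D^{j_1' b_r + ... + j_r' b_1}, and ξ_D = exp(2πi/D) and Sym(j_1,...,j_r) is the set of all distinct rearrangements of the tuple (j_1,...,j_r). -/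

import Mathlib

noncomputable section

open Finset List

namespace Stmt10Aux

lemma Iio_filt {r : ℕ} (i : Fin r) : Finset.Iio i = Finset.univ.filter (· < i) := by
  ext j; simp

lemma sum_Iio_cons {r : ℕ} (q0 : ℕ) (qt : Fin r → ℕ) (i : Fin r) :
    ∑ j ∈ Finset.Iio (i.succ), (Fin.cons q0 qt : Fin (r+1) → ℕ) j
      = q0 + ∑ j ∈ Finset.Iio i, qt j := by
  rw [Iio_filt, Finset.sum_filter, Fin.sum_univ_succ, Iio_filt, Finset.sum_filter]
  simp [Fin.succ_pos, Fin.succ_lt_succ_iff]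

lemma Iio_zero_fin {r : ℕ} : Finset.Iio (0 : Fin (r+1)) = ∅ := by
  ext j; simp [Fin.pos_iff_ne_zero]

lemma W_zero : ∀ (r : ℕ) (q : Fin r → ℕ) (n : ℕ), n < ∑ i, q i →
    ∏ i, (n - ∑ j ∈ Finset.Iio i, q j).choose (q i) = 0 := by
  intro r
  induction r with
  | zero => intro q n h; simp at h
  | succ r ih =>
    intro q n h
    rw [← Fin.cons_self_tail q] at h ⊢
    rw [Fin.prod_univ_succ]
    simp only [Fin.cons_zero, Fin.cons_succ, sum_Iio_cons, Iio_zero_fin, Finset.sum_empty,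
      Nat.sub_zero, ← Nat.sub_sub]
    rcases lt_or_ge n (q 0) with h0 | h0
    · simp [Nat.choose_eq_zero_of_lt h0]
    · have h2 : n - q 0 < ∑ i, Fin.tail q i := by
        rw [Fin.sum_univ_succ, Fin.cons_zero] at h
        simp only [Fin.cons_succ] at h
        omega
      rw [ih (Fin.tail q) (n - q 0) h2, mul_zero]

lemma piFinset_cons_split {r : ℕ} (S : Fin (r+1) → Finset ℕ) :
    Fintype.piFinset S
      = (S 0 ×ˢ Fintype.piFinset (Fin.tail S)).map (Fin.consEquiv _).toEmbedding := by
  simpa using Finset.filter_piFinset_eq_map_consEquiv S (fun _ => True)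

lemma multinomA : ∀ (r n m : ℕ), n ≤ m → ∀ x : Fin r → ℂ,
    ∑ q ∈ Fintype.piFinset (fun _ : Fin r => Finset.range (m+1)),
      (∏ i, ((n - ∑ j ∈ Finset.Iio i, q j).choose (q i) : ℂ)) * ∏ i, x i ^ q i
    = (1 + ∑ i, x i) ^ n := by
  intro r
  induction r with
  | zero => intro n m _ x; simp
  | succ r ih =>
    intro n m hnm x
    rw [piFinset_cons_split, Finset.sum_map, Finset.sum_product]
    have htail : Fin.tail (fun _ : Fin (r+1) => Finset.range (m+1))
        = fun _ : Fin r => Finset.range (m+1) := rfl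
    rw [htail]
    have key : ∀ q0 ∈ Finset.range (m+1),
        ∑ qt ∈ Fintype.piFinset (fun _ : Fin r => Finset.range (m+1)),
          (∏ i : Fin (r+1), (((n - ∑ j ∈ Finset.Iio i,
              ((Fin.consEquiv _).toEmbedding (q0, qt) : Fin (r+1) → ℕ) j).choose
              (((Fin.consEquiv _).toEmbedding (q0, qt) : Fin (r+1) → ℕ) i)) : ℂ)) *
            ∏ i : Fin (r+1), x i ^ (((Fin.consEquiv _).toEmbedding (q0, qt) : Fin (r+1) → ℕ) i)
        = ((n.choose q0 : ℂ) * x 0 ^ q0) *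
            ((1 + ∑ i : Fin r, x i.succ) ^ (n - q0)) := by
      intro q0 _
      rw [← ih (n - q0) m (le_trans (Nat.sub_le n q0) hnm) (fun i => x i.succ), Finset.mul_sum]
      apply Finset.sum_congr rfl
      intro qt _
      have hc : ((Fin.consEquiv (fun _ => ℕ)).toEmbedding (q0, qt) : Fin (r+1) → ℕ)
          = Fin.cons q0 qt := rfl
      rw [hc, Fin.prod_univ_succ, Fin.prod_univ_succ]
      simp only [Fin.cons_zero, Fin.cons_succ, sum_Iio_cons, Iio_zero_fin, Finset.sum_empty,
        Nat.sub_zero, ← Nat.sub_sub]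
      ring
    rw [Finset.sum_congr rfl key]
    have hsub : Finset.range (n+1) ⊆ Finset.range (m+1) := by
      intro a ha; simp at ha ⊢; omega
    rw [← Finset.sum_subset hsub (by
      intro q0 _ hq0
      simp only [Finset.mem_range, not_lt] at hq0
      have : n.choose q0 = 0 := Nat.choose_eq_zero_of_lt (by omega)
      simp [this])]
    rw [Fin.sum_univ_succ]
    have hre : (1 + (x 0 + ∑ i : Fin r, x i.succ))
        = (x 0 + (1 + ∑ i : Fin r, x i.succ)) := by ring
    rw [hre, add_pow]
    apply Finset.sum_congr rfl
    intro k _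
    ring

lemma xiD_pow_D {D : ℕ} (hD : 0 < D) {ξD : ℂ}
    (hξD : ξD = Complex.exp (2 * (Real.pi : ℂ) * Complex.I / D)) : ξD ^ D = 1 := by
  rw [hξD, ← Complex.exp_nat_mul]
  have hD' : (D : ℂ) ≠ 0 := Nat.cast_ne_zero.mpr hD.ne'
  rw [show (D : ℂ) * (2 * (Real.pi : ℂ) * Complex.I / D) = 2 * Real.pi * Complex.I by
    field_simp]
  exact Complex.exp_two_pi_mul_I

lemma xiD_ne_one {D : ℕ} (hD : 0 < D) {ξD : ℂ}
    (hξD : ξD = Complex.exp (2 * (Real.pi : ℂ) * Complex.I / D)) (m : ℤ)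
    (hm : ¬ (D:ℤ) ∣ m) : ξD ^ m ≠ 1 := by
  intro h
  rw [hξD, ← Complex.exp_int_mul] at h
  rw [Complex.exp_eq_one_iff] at h
  obtain ⟨k, hk⟩ := h
  have hD' : (D : ℂ) ≠ 0 := Nat.cast_ne_zero.mpr hD.ne'
  have h2 : (2 * (Real.pi : ℂ) * Complex.I) ≠ 0 := by
    simp [Real.pi_ne_zero, Complex.I_ne_zero]
  apply hm
  refine ⟨k, ?_⟩
  have h4 : (m : ℂ) = (k : ℂ) * D := by
    field_simp at hk
    have h3 : (m:ℂ) * (2 * (Real.pi:ℂ) * Complex.I)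
        = ((k:ℂ) * D) * (2 * (Real.pi:ℂ) * Complex.I) := by
      linear_combination (2 * (Real.pi:ℂ) * Complex.I) * hk
    exact mul_right_cancel₀ h2 h3
  have h5 : (m : ℂ) = ((D * k : ℤ) : ℂ) := by push_cast; linear_combination h4
  exact_mod_cast h5

lemma root_sum {D : ℕ} (hD : 0 < D) {ξD : ℂ}
    (hξD : ξD = Complex.exp (2 * (Real.pi : ℂ) * Complex.I / D)) (m : ℤ) :
    ∑ j ∈ Finset.range D, ξD ^ ((j:ℤ) * m) = if (D:ℤ) ∣ m then (D:ℂ) else 0 := by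
  have hpow : ∀ j : ℕ, ξD ^ ((j:ℤ) * m) = (ξD ^ m) ^ j := by
    intro j
    rw [mul_comm, zpow_mul, zpow_natCast]
  simp only [hpow]
  split_ifs with h
  · obtain ⟨k, rfl⟩ := h
    have : ξD ^ ((D:ℤ) * k) = 1 := by
      rw [zpow_mul, zpow_natCast, xiD_pow_D hD hξD, one_zpow]
    simp [this]
  · have hz1 : ξD ^ m ≠ 1 := xiD_ne_one hD hξD m h
    have hzD : (ξD ^ m) ^ D = 1 := by
      rw [← zpow_natCast (ξD ^ m), ← zpow_mul, mul_comm, zpow_mul, zpow_natCast,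
        xiD_pow_D hD hξD, one_zpow]
    rw [geom_sum_eq hz1, hzD]
    simp

section Fper
variable {r D : ℕ} {F : (Fin r → ℤ) → ℤ}

lemma F_update_nat (hF : ∀ (q : Fin r → ℤ) (j : Fin r), F (Function.update q j (q j + D)) = F q)
    (q : Fin r → ℤ) (a : Fin r) (k : ℕ) :
    F (Function.update q a (q a + (k : ℤ) * D)) = F q := by
  induction k with
  | zero => simp
  | succ k ih =>
    have h1 : Function.update q a (q a + ((k:ℤ)+1) * D)
        = Function.update (Function.update q a (q a + (k:ℤ) * D)) a
            ((Function.update q a (q a + (k:ℤ)*D)) a + D) := by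
      rw [Function.update_self, Function.update_idem]
      ring_nf
    push_cast
    rw [h1, hF, ih]

lemma F_update_int (hF : ∀ (q : Fin r → ℤ) (j : Fin r), F (Function.update q j (q j + D)) = F q)
    (q : Fin r → ℤ) (a : Fin r) (k : ℤ) :
    F (Function.update q a (q a + k * D)) = F q := by
  rcases le_or_gt 0 k with hk | hk
  · obtain ⟨k', rfl⟩ := Int.eq_ofNat_of_zero_le hk
    exact F_update_nat hF q a k'
  · set q' := Function.update q a (q a + k * D) with hq'
    obtain ⟨k', hk'⟩ : ∃ k' : ℕ, (k' : ℤ) = -k :=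
      ⟨(-k).toNat, Int.toNat_of_nonneg (by omega)⟩
    have h2 : F (Function.update q' a (q' a + (k' : ℤ) * D)) = F q' := F_update_nat hF q' a k'
    have h3 : Function.update q' a (q' a + (k' : ℤ) * D) = q := by
      rw [hq', Function.update_idem, Function.update_self]
      rw [show q a + k * D + (k':ℤ) * D = q a by rw [hk']; ring]
      exact Function.update_eq_self a q
    rw [h3] at h2
    exact h2.symm

lemma F_congr_aux (hF : ∀ (q : Fin r → ℤ) (j : Fin r), F (Function.update q j (q j + D)) = F q) :
    ∀ s : Finset (Fin r), ∀ q q' : Fin r → ℤ, (∀ i, (D:ℤ) ∣ (q i - q' i)) →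
      (∀ i ∉ s, q i = q' i) → F q = F q' := by
  intro s
  induction s using Finset.induction with
  | empty =>
    intro q q' _ h2
    have : q = q' := funext fun i => h2 i (Finset.notMem_empty i)
    rw [this]
  | @insert a s ha ih =>
    intro q q' h1 h2
    obtain ⟨k, hk⟩ := h1 a
    have hqa : q' a = q a + (-k) * D := by linarith [hk]
    have step : F (Function.update q a (q' a)) = F q := by
      rw [hqa]; exact F_update_int hF q a (-k)
    rw [← step]
    apply ih
    · intro i
      by_cases hi : i = a
      · subst hi; simp
      · simp only [Function.update_of_ne hi]; exact h1 i
    · intro i hi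
      by_cases hia : i = a
      · subst hia; simp
      · rw [Function.update_of_ne hia]
        exact h2 i (by simp [hia, hi])

lemma F_congr_mod (hF : ∀ (q : Fin r → ℤ) (j : Fin r), F (Function.update q j (q j + D)) = F q)
    (q q' : Fin r → ℤ) (h : ∀ i, (D:ℤ) ∣ (q i - q' i)) : F q = F q' :=
  F_congr_aux hF Finset.univ q q' h (fun i hi => absurd (Finset.mem_univ i) hi)

end Fper

lemma dvd_iff_mod {D : ℕ} (hD : 0 < D) (x y : ℕ) (hx : x < D) :
    (D:ℤ) ∣ (x:ℤ) - (y:ℤ) ↔ x = y % D := by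
  constructor
  · rintro ⟨k, hk⟩
    have h1 : (x:ℤ) % D = (y:ℤ) % D := by
      rw [show (x:ℤ) = (y:ℤ) + (D:ℤ) * k by linarith]
      apply Int.add_mul_emod_self_left
    have h2 : (x:ℤ) % D = x := Int.emod_eq_of_lt (by positivity) (by exact_mod_cast hx)
    have h3 : (y:ℤ) % D = ((y % D : ℕ) : ℤ) := by push_cast; ring
    omega
  · rintro rfl
    refine ⟨-((y / D : ℕ) : ℤ), ?_⟩
    have := Nat.div_add_mod y D
    push_cast
    zify at this
    linarith

lemma stepB {r D : ℕ} (hD : 0 < D) {ξD : ℂ}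
    (hξD : ξD = Complex.exp (2 * (Real.pi : ℂ) * Complex.I / D))
    {F : (Fin r → ℤ) → ℤ}
    (hF : ∀ (q : Fin r → ℤ) (j : Fin r), F (Function.update q j (q j + D)) = F q)
    (ξ : ℂ) (q : Fin r → ℕ) :
    ξ ^ F (fun i => (q i : ℤ))
      = ∑ b ∈ Fintype.piFinset (fun _ : Fin r => Finset.range D),
          ξ ^ F (fun i => (b i : ℤ)) *
            ((1/(D:ℂ)^r) * ∑ j ∈ Fintype.piFinset (fun _ : Fin r => Finset.range D),
              ∏ i, ξD ^ ((j i : ℤ) * ((b i : ℤ) - (q i : ℤ)))) := by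
  have key : ∀ b ∈ Fintype.piFinset (fun _ : Fin r => Finset.range D),
      ξ ^ F (fun i => (b i : ℤ)) *
          ((1/(D:ℂ)^r) * ∑ j ∈ Fintype.piFinset (fun _ : Fin r => Finset.range D),
            ∏ i, ξD ^ ((j i : ℤ) * ((b i : ℤ) - (q i : ℤ))))
        = if b = (fun i => q i % D) then ξ ^ F (fun i => (b i : ℤ)) else 0 := by
    intro b hb
    rw [← Finset.prod_univ_sum (t := fun _ : Fin r => Finset.range D)
      (f := fun (i : Fin r) (x : ℕ) => ξD ^ ((x:ℤ) * ((b i:ℤ) - (q i:ℤ))))]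
    have hrs : ∀ i : Fin r, ∑ ji ∈ Finset.range D, ξD ^ ((ji : ℤ) * ((b i : ℤ) - (q i : ℤ)))
        = if (D:ℤ) ∣ ((b i : ℤ) - (q i : ℤ)) then (D:ℂ) else 0 := fun i => root_sum hD hξD _
    rw [Finset.prod_congr rfl (fun i _ => hrs i)]
    by_cases hall : ∀ i, (D:ℤ) ∣ ((b i : ℤ) - (q i : ℤ))
    · have hbq : b = fun i => q i % D := by
        funext i
        exact (dvd_iff_mod hD _ _ (Finset.mem_range.mp (Fintype.mem_piFinset.mp hb i))).mp (hall i)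
      rw [if_pos hbq, Finset.prod_congr rfl (fun i _ => if_pos (hall i)), Finset.prod_const, Finset.card_univ, Fintype.card_fin]
      have hD' : ((D:ℂ)) ^ r ≠ 0 := pow_ne_zero _ (Nat.cast_ne_zero.mpr hD.ne')
      field_simp
    · push_neg at hall
      obtain ⟨i0, hi0⟩ := hall
      rw [Finset.prod_eq_zero (Finset.mem_univ i0)
        (show (if (D:ℤ) ∣ ((b i0:ℤ) - (q i0:ℤ)) then (D:ℂ) else 0) = 0 from if_neg hi0)]
      have hbq : ¬ (b = fun i => q i % D) := by
        intro h
        apply hi0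
        rw [h]
        exact (dvd_iff_mod hD _ _ (Nat.mod_lt _ hD)).mpr rfl
      rw [if_neg hbq]
      ring
  rw [Finset.sum_congr rfl key, Finset.sum_ite_eq' _ (fun i => q i % D)
    (fun b => ξ ^ F (fun i => (b i : ℤ)))]
  rw [if_pos (by rw [Fintype.mem_piFinset]; intro i; exact Finset.mem_range.mpr (Nat.mod_lt _ hD))]
  congr 1
  apply F_congr_mod hF
  intro i
  have h := (dvd_iff_mod hD (q i % D) (q i) (Nat.mod_lt _ hD)).mpr rfl
  simpa [neg_sub] using (dvd_neg.mpr h)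

lemma inner_factor {r D : ℕ} {ξD : ℂ}
    (hξD : ξD = Complex.exp (2 * (Real.pi : ℂ) * Complex.I / D))
    (j b q : Fin r → ℕ) :
    ∏ i, ξD ^ ((j i : ℤ) * ((b i : ℤ) - (q i : ℤ)))
      = (∏ i, ξD ^ ((j i : ℤ) * (b i : ℤ))) * ∏ i, (ξD ^ (-(j i : ℤ))) ^ (q i) := by
  have hne : ξD ≠ 0 := by rw [hξD]; exact Complex.exp_ne_zero _
  rw [← Finset.prod_mul_distrib]
  apply Finset.prod_congr rfl
  intro i _
  rw [← zpow_natCast (ξD ^ (-(j i : ℤ))) (q i), ← zpow_mul, ← zpow_add₀ hne]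
  congr 1
  ring

lemma lhs_eq {r D : ℕ} (hD : 0 < D) {ξD : ℂ}
    (hξD : ξD = Complex.exp (2 * (Real.pi : ℂ) * Complex.I / D))
    {F : (Fin r → ℤ) → ℤ}
    (hF : ∀ (q : Fin r → ℤ) (j : Fin r), F (Function.update q j (q j + D)) = F q)
    (ξ : ℂ) (n : ℕ) :
    (∑ q ∈ (Fintype.piFinset fun _ : Fin r => Finset.range (n + 1)).filter
          (fun q => ∑ i, q i ≤ n),
        (∏ i : Fin r, ((n - ∑ j ∈ Finset.Iio i, q j).choose (q i) : ℂ)) *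
          ξ ^ F (fun i => (q i : ℤ)))
      = ∑ j ∈ Fintype.piFinset (fun _ : Fin r => Finset.range D),
          (1/(D:ℂ)^r) *
            (∑ b ∈ Fintype.piFinset (fun _ : Fin r => Finset.range D),
              ξ ^ F (fun i => (b i : ℤ)) * ∏ i, ξD ^ ((j i : ℤ) * (b i : ℤ))) *
            (1 + ∑ i, ξD ^ (-(j i : ℤ))) ^ n := by
  rw [Finset.sum_filter_of_ne ?hvanish]
  case hvanish =>
    intro q hq hne
    by_contra hgt
    push_neg at hgt
    apply hne
    have h0 : ∏ i, (n - ∑ j ∈ Finset.Iio i, q j).choose (q i) = 0 := W_zero r q n hgt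
    have hc : (∏ i : Fin r, ((n - ∑ j ∈ Finset.Iio i, q j).choose (q i) : ℂ)) = 0 := by
      rw [← Nat.cast_prod, h0, Nat.cast_zero]
    rw [hc, zero_mul]
  rw [Finset.sum_congr rfl (fun q _ => by rw [stepB hD hξD hF ξ q])]
  simp only [Finset.mul_sum]
  rw [Finset.sum_comm]
  rw [Finset.sum_congr rfl (fun b _ => Finset.sum_comm)]
  rw [Finset.sum_comm]
  apply Finset.sum_congr rfl
  intro j _
  rw [← multinomA r n n le_rfl (fun i => ξD ^ (-(j i : ℤ)))]
  rw [Finset.sum_mul_sum]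
  apply Finset.sum_congr rfl
  intro b _
  apply Finset.sum_congr rfl
  intro q _
  rw [inner_factor hξD j b q]
  ring

lemma list_eq_ofFn' {r : ℕ} (γ : List ℕ) (hlen : γ.length = r) :
    γ = List.ofFn (fun i : Fin r => γ.get (Fin.cast hlen.symm i)) := by
  apply List.ext_get (by simp [hlen])
  intro i h1 h2
  simp

lemma groupC (D r : ℕ) (f : List ℕ → ℂ) :
    ∑ jj ∈ (Fintype.piFinset fun _ : Fin r => Finset.range D).filter
        (fun jj => ∀ i i' : Fin r, i ≤ i' → jj i' ≤ jj i),
      ∑ γ ∈ (List.ofFn jj).permutations.toFinset, f γ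
    = ∑ j ∈ Fintype.piFinset (fun _ : Fin r => Finset.range D), f (List.ofFn j) := by
  classical
  set s := (Fintype.piFinset fun _ : Fin r => Finset.range D).filter
      (fun jj => ∀ i i' : Fin r, i ≤ i' → jj i' ≤ jj i) with hs
  set t : (Fin r → ℕ) → Finset (List ℕ) := fun jj => (List.ofFn jj).permutations.toFinset with ht
  have hsorted : ∀ jj, jj ∈ s → List.Pairwise (· ≥ ·) (List.ofFn jj) := by
    intro jj hjj
    rw [hs, Finset.mem_filter] at hjj
    rw [List.pairwise_ofFn]
    intro i i' hlt
    exact hjj.2 i i' hlt.le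
  have hdisj : (s : Set (Fin r → ℕ)).PairwiseDisjoint t := by
    intro jj hjj jj' hjj' hne
    simp only [Finset.disjoint_left]
    intro γ hγ hγ'
    rw [ht] at hγ hγ'
    simp only [List.mem_toFinset, List.mem_permutations] at hγ hγ'
    have hperm : List.ofFn jj ~ List.ofFn jj' := hγ.symm.trans hγ'
    have := List.Perm.eq_of_pairwise' (hsorted jj hjj) (hsorted jj' hjj') hperm
    exact hne (List.ofFn_injective this)
  have hbu : s.biUnion t
      = (Fintype.piFinset (fun _ : Fin r => Finset.range D)).image List.ofFn := by
    ext γ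
    simp only [Finset.mem_biUnion, Finset.mem_image, List.mem_toFinset, List.mem_permutations, ht]
    constructor
    · rintro ⟨jj, hjj, hperm⟩
      rw [hs, Finset.mem_filter] at hjj
      have hlen : γ.length = r := by
        rw [hperm.length_eq, List.length_ofFn]
      have hall : ∀ x ∈ γ, x < D := by
        intro x hx
        have hx2 : x ∈ List.ofFn jj := hperm.mem_iff.mp hx
        rw [List.mem_ofFn] at hx2
        obtain ⟨i', hi'⟩ := hx2
        rw [← hi']
        exact Finset.mem_range.mp (Fintype.mem_piFinset.mp hjj.1 i')
      refine ⟨fun i => γ.get (Fin.cast hlen.symm i), ?_, (list_eq_ofFn' γ hlen).symm⟩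
      rw [Fintype.mem_piFinset]
      intro i
      rw [Finset.mem_range]
      exact hall _ (γ.get_mem _)
    · rintro ⟨j, hj, rfl⟩
      obtain ⟨L, hLperm, hLsorted⟩ :
          ∃ L, List.ofFn j ~ L ∧ List.Pairwise (· ≥ ·) L :=
        ⟨List.insertionSort (· ≥ ·) (List.ofFn j),
          (List.perm_insertionSort _ _).symm, List.pairwise_insertionSort _ _⟩
      have hlen : L.length = r := by
        rw [← hLperm.length_eq, List.length_ofFn]
      have hall : ∀ x ∈ L, x < D := by
        intro x hx
        have hx2 : x ∈ List.ofFn j := hLperm.mem_iff.mpr hx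
        rw [List.mem_ofFn] at hx2
        obtain ⟨i', hi'⟩ := hx2
        rw [← hi']
        exact Finset.mem_range.mp (Fintype.mem_piFinset.mp hj i')
      refine ⟨fun i => L.get (Fin.cast hlen.symm i), ?_, ?_⟩
      · rw [hs, Finset.mem_filter]
        refine ⟨?_, ?_⟩
        · rw [Fintype.mem_piFinset]
          intro i
          rw [Finset.mem_range]
          exact hall _ (L.get_mem _)
        · intro i i' hle
          exact hLsorted.rel_get_of_le (by exact hle)
      · rw [← list_eq_ofFn' L hlen]
        exact hLperm
  rw [← Finset.sum_biUnion hdisj, hbu, Finset.sum_image]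
  intro a _ b _ hab
  exact List.ofFn_injective hab

lemma getD_ofFn {r : ℕ} (j : Fin r → ℕ) (i : Fin r) :
    (List.ofFn j).getD (i : ℕ) 0 = j i := by
  rw [List.getD_eq_getElem _ _ (by simp [i.isLt])]
  simp

lemma sum_getD_eq_map_sum {r : ℕ} (γ : List ℕ) (hlen : γ.length = r) (g : ℕ → ℂ) :
    ∑ i : Fin r, g (γ.getD (i : ℕ) 0) = (γ.map g).sum := by
  conv_rhs => rw [list_eq_ofFn' γ hlen]
  rw [List.map_ofFn, List.sum_ofFn]
  apply Finset.sum_congr rfl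
  intro i _
  simp only [Function.comp_apply]
  congr 1
  rw [List.getD_eq_getElem _ _ (by omega)]
  simp

lemma sum_getD_perm {r : ℕ} (jj : Fin r → ℕ) (γ : List ℕ) (h : γ ~ List.ofFn jj)
    (g : ℕ → ℂ) :
    ∑ i : Fin r, g (γ.getD (i : ℕ) 0) = ∑ i : Fin r, g (jj i) := by
  have hlen : γ.length = r := by rw [h.length_eq, List.length_ofFn]
  rw [sum_getD_eq_map_sum γ hlen g, List.Perm.sum_eq (List.Perm.map g h), List.map_ofFn,
    List.sum_ofFn]
  apply Finset.sum_congr rfl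
  intro i _
  rfl

lemma sum_rev_eq {r : ℕ} (h : Fin r → ℂ) :
    ∑ i : Fin r, h (Fin.rev i) = ∑ i : Fin r, h i :=
  Fintype.sum_equiv Fin.revPerm (fun i => h (Fin.rev i)) h (fun _ => rfl)

lemma sum_rev_eq_nat {r : ℕ} (h : Fin r → ℕ) :
    ∑ i : Fin r, h (Fin.rev i) = ∑ i : Fin r, h i :=
  Fintype.sum_equiv Fin.revPerm (fun i => h (Fin.rev i)) h (fun _ => rfl)

end Stmt10Aux

open Stmt10Aux


/-- Closed formula with coefficients grouped by rearrangements: with notation as in the paper,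
`S(n) = ∑_{j_1=0}^{D-1} ∑_{j_2=0}^{j_1} ⋯ ∑_{j_r=0}^{j_{r-1}} c_{j_1,…,j_r}(D)
(1 + ξ_D^{-j_1} + ⋯ + ξ_D^{-j_r})^n`, where
`c_{j_1,…,j_r}(D) = (1/D^r) ∑_b ξ^{F(b_1,…,b_r)} ∑_{j' ∈ Sym(j_1,…,j_r)}
ξ_D^{j_1' b_r + ⋯ + j_r' b_1}`.  The nested decreasing sums are encoded as a sum over
weakly decreasing tuples `jj` with entries in `[0, D-1]`, and `Sym(jj)` as the set of
distinct permutations of the list `[j_1,…,j_r]`. -/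
theorem stmt10 (D : ℕ) (hD : 0 < D) (r : ℕ) (F : (Fin r → ℤ) → ℤ)
    (hF : ∀ (q : Fin r → ℤ) (j : Fin r), F (Function.update q j (q j + D)) = F q)
    (ξ : ℂ) (hξ : ξ ^ D = 1)
    (ξD : ℂ) (hξD : ξD = Complex.exp (2 * (Real.pi : ℂ) * Complex.I / D)) (n : ℕ) :
    (∑ q ∈ (Fintype.piFinset fun _ : Fin r => Finset.range (n + 1)).filter
          (fun q => ∑ i, q i ≤ n),
        (∏ i : Fin r, ((n - ∑ j ∈ Finset.Iio i, q j).choose (q i) : ℂ)) *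
          ξ ^ F (fun i => (q i : ℤ)))
      = ∑ jj ∈ (Fintype.piFinset fun _ : Fin r => Finset.range D).filter
            (fun jj => ∀ i i' : Fin r, i ≤ i' → jj i' ≤ jj i),
          ((1 / (D : ℂ) ^ r) *
              ∑ b ∈ Fintype.piFinset fun _ : Fin r => Finset.range D,
                ξ ^ F (fun i => (b i : ℤ)) *
                  ∑ γ ∈ (List.ofFn jj).permutations.toFinset,
                    ξD ^ (∑ i : Fin r, γ.getD (i : ℕ) 0 * b (Fin.rev i))) *
            (1 + ∑ i : Fin r, ξD ^ (-(jj i : ℤ))) ^ n := by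
  classical
  have hne : ξD ≠ 0 := by rw [hξD]; exact Complex.exp_ne_zero _
  -- the per-list summand
  set g : List ℕ → ℂ := fun γ =>
    (1/(D:ℂ)^r) *
      (∑ b ∈ Fintype.piFinset (fun _ : Fin r => Finset.range D),
        ξ ^ F (fun i => (b i : ℤ)) * ξD ^ (∑ i : Fin r, γ.getD (i : ℕ) 0 * b (Fin.rev i))) *
      (1 + ∑ i : Fin r, ξD ^ (-(γ.getD (i : ℕ) 0 : ℤ))) ^ n with hg
  -- RHS = ∑_jj ∑_γ g γ
  have hrhs : ∑ jj ∈ (Fintype.piFinset fun _ : Fin r => Finset.range D).filter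
            (fun jj => ∀ i i' : Fin r, i ≤ i' → jj i' ≤ jj i),
          ((1 / (D : ℂ) ^ r) *
              ∑ b ∈ Fintype.piFinset fun _ : Fin r => Finset.range D,
                ξ ^ F (fun i => (b i : ℤ)) *
                  ∑ γ ∈ (List.ofFn jj).permutations.toFinset,
                    ξD ^ (∑ i : Fin r, γ.getD (i : ℕ) 0 * b (Fin.rev i))) *
            (1 + ∑ i : Fin r, ξD ^ (-(jj i : ℤ))) ^ n
      = ∑ jj ∈ (Fintype.piFinset fun _ : Fin r => Finset.range D).filter
            (fun jj => ∀ i i' : Fin r, i ≤ i' → jj i' ≤ jj i),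
          ∑ γ ∈ (List.ofFn jj).permutations.toFinset, g γ := by
    apply Finset.sum_congr rfl
    intro jj _
    simp only [Finset.mul_sum, Finset.sum_mul]
    rw [Finset.sum_comm]
    apply Finset.sum_congr rfl
    intro γ hγ
    have hperm : γ ~ List.ofFn jj :=
      List.mem_permutations.mp (List.mem_toFinset.mp hγ)
    have hpow : (1 + ∑ i : Fin r, ξD ^ (-(γ.getD (i : ℕ) 0 : ℤ))) ^ n
        = (1 + ∑ i : Fin r, ξD ^ (-(jj i : ℤ))) ^ n := by
      rw [sum_getD_perm jj γ hperm (fun m => ξD ^ (-(m:ℤ)))]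
    rw [hg]
    simp only [Finset.mul_sum, Finset.sum_mul]
    rw [hpow]
  rw [hrhs, groupC D r g]
  rw [lhs_eq hD hξD hF ξ n]
  -- now: ∑_j T j = ∑_j g (ofFn j); reindex by rev
  apply Finset.sum_nbij' (i := fun j => j ∘ Fin.rev) (j := fun j => j ∘ Fin.rev)
  · intro a ha
    rw [Fintype.mem_piFinset] at ha ⊢
    intro i
    exact ha _
  · intro a ha
    rw [Fintype.mem_piFinset] at ha ⊢
    intro i
    exact ha _
  · intro a _
    funext i
    simp [Function.comp, Fin.rev_rev]
  · intro a _
    funext i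
    simp [Function.comp, Fin.rev_rev]
  · intro j _
    rw [hg]
    have hgetD : ∀ i : Fin r, (List.ofFn (j ∘ Fin.rev)).getD (i : ℕ) 0 = j (Fin.rev i) :=
      fun i => getD_ofFn (j ∘ Fin.rev) i
    simp only [hgetD]
    congr 1
    · congr 1
      apply Finset.sum_congr rfl
      intro b _
      congr 1
      -- ∏ i, ξD ^ ((j i:ℤ)*(b i:ℤ)) = ξD ^ (∑ i, j (rev i) * b (rev i))
      rw [show ∑ i : Fin r, j (Fin.rev i) * b (Fin.rev i)
            = ∑ i : Fin r, j i * b i from sum_rev_eq_nat (fun i => j i * b i)]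
      rw [← Finset.prod_pow_eq_pow_sum]
      apply Finset.prod_congr rfl
      intro i _
      rw [← zpow_natCast ξD (j i * b i)]
      congr 1
      try push_cast
      try ring
    all_goals rw [show ∑ x : Fin r, ξD ^ (-(j (Fin.rev x) : ℤ))
        = ∑ i : Fin r, ξD ^ (-(j i : ℤ)) from sum_rev_eq (fun i => ξD ^ (-(j i : ℤ)))]
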